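/- Let (A,C)_ψ be a factorisable entwining structure, B = C^{*op} the opposite of the dual convolution algebra, and ψ̄ : A ⊗ C* → C* ⊗ A the associated factorisation map. Then B ⊗ A with product (b ⊗ a)(b' ⊗ a') = b·ψ̄(a ⊗ b')·a' (i.e., b b'_i ⊗ a^i a' where ψ̄(a⊗b') = b'_i ⊗ a^i) is an associative unital k-algebra with unit ε ⊗ 1_A. -/

import Mathlib

open TensorProduct LinearMap

noncomputable section

variable (k A C : Type*) [CommRing k] [Ring A] [Algebra k A]
  [AddCommGroup C] [Module k C] [Coalgebra k C]

/-- An entwining structure `(A,C)_ψ` over `k`. -/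
structure Entwining where
  psi : C ⊗[k] A →ₗ[k] A ⊗[k] C
  mul_compat :
    psi ∘ₗ lTensor C (LinearMap.mul' k A)
      = rTensor C (LinearMap.mul' k A)
        ∘ₗ (TensorProduct.assoc k A A C).symm.toLinearMap
        ∘ₗ lTensor A psi
        ∘ₗ (TensorProduct.assoc k A C A).toLinearMap
        ∘ₗ rTensor A psi
        ∘ₗ (TensorProduct.assoc k C A A).symm.toLinearMap
  one_compat : ∀ c : C, psi (c ⊗ₜ[k] (1 : A)) = (1 : A) ⊗ₜ[k] c
  comul_compat :
    lTensor A (Coalgebra.comul (R := k) (A := C)) ∘ₗ psi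
      = (TensorProduct.assoc k A C C).toLinearMap
        ∘ₗ rTensor C psi
        ∘ₗ (TensorProduct.assoc k C A C).symm.toLinearMap
        ∘ₗ lTensor C psi
        ∘ₗ (TensorProduct.assoc k C C A).toLinearMap
        ∘ₗ rTensor A (Coalgebra.comul (R := k) (A := C))
  counit_compat : ∀ (c : C) (a : A),
    (TensorProduct.rid k A)
        ((lTensor A (Coalgebra.counit (R := k) (A := C))) (psi (c ⊗ₜ[k] a)))
      = Coalgebra.counit (R := k) c • a

variable {k A C} in
/-- Evaluation of the first (dual) factor at `c`: `ξ ⊗ a ↦ ξ(c) • a`. -/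
def evFst (c : C) : Module.Dual k C ⊗[k] A →ₗ[k] A :=
  TensorProduct.lift ((LinearMap.lsmul k A) ∘ₗ
    (LinearMap.applyₗ (R := k) c : (C →ₗ[k] k) →ₗ[k] k))

variable {k A C} in
/-- Evaluation of the second (coalgebra) factor against `ξ`: `a ⊗ c ↦ ξ(c) • a`. -/
def evSnd (ξ : Module.Dual k C) : A ⊗[k] C →ₗ[k] A :=
  (TensorProduct.rid k A).toLinearMap ∘ₗ lTensor A ξ

variable {k A C} in
/-- `ψ̄ : A ⊗ C* → C* ⊗ A` is a factorisation map for the entwining `ψ`: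
`⟨c^α, ξ⟩ a_α = ξ_i(c) a^i`. -/
def IsFactorisation (E : Entwining k A C)
    (ψbar : A ⊗[k] Module.Dual k C →ₗ[k] Module.Dual k C ⊗[k] A) : Prop :=
  ∀ (a : A) (ξ : Module.Dual k C) (c : C),
    evFst c (ψbar (a ⊗ₜ[k] ξ)) = evSnd ξ (E.psi (c ⊗ₜ[k] a))

/-- The product of `B = C^{*op}`, i.e. the opposite convolution product:
`⟨c, b b'⟩ = ⟨c₍₂₎, b⟩ ⟨c₍₁₎, b'⟩`, as a linear map `B ⊗ B →ₗ B`. -/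
def opConv : Module.Dual k C ⊗[k] Module.Dual k C →ₗ[k] Module.Dual k C :=
  ((LinearMap.llcomp k C (C ⊗[k] C) k).flip (Coalgebra.comul (R := k) (A := C)))
  ∘ₗ (LinearMap.llcomp k (C ⊗[k] C) (k ⊗[k] k) k (LinearMap.mul' k k))
  ∘ₗ TensorProduct.homTensorHomMap (RingHom.id k) C C k k
  ∘ₗ (TensorProduct.comm k (Module.Dual k C) (Module.Dual k C)).toLinearMap

variable {k A C} in
/-- The multiplication of the smash product `B #_ψ̄ A` on `B ⊗ A`, `B = C^{*op}`:
`(b ⊗ a)(b' ⊗ a') = b ψ̄(a ⊗ b') a'`. -/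
def smashMul (ψbar : A ⊗[k] Module.Dual k C →ₗ[k] Module.Dual k C ⊗[k] A) :
    (Module.Dual k C ⊗[k] A) ⊗[k] (Module.Dual k C ⊗[k] A) →ₗ[k]
      Module.Dual k C ⊗[k] A :=
  rTensor A (opConv k C)
  ∘ₗ (TensorProduct.assoc k (Module.Dual k C) (Module.Dual k C) A).symm.toLinearMap
  ∘ₗ lTensor (Module.Dual k C) (lTensor (Module.Dual k C) (LinearMap.mul' k A))
  ∘ₗ lTensor (Module.Dual k C) (TensorProduct.assoc k (Module.Dual k C) A A).toLinearMap
  ∘ₗ lTensor (Module.Dual k C) (rTensor A ψbar)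
  ∘ₗ lTensor (Module.Dual k C) (TensorProduct.assoc k A (Module.Dual k C) A).symm.toLinearMap
  ∘ₗ (TensorProduct.assoc k (Module.Dual k C) A (Module.Dual k C ⊗[k] A)).toLinearMap

/-- The unit `ε ⊗ 1_A` of the smash product. -/
def smashOne : Module.Dual k C ⊗[k] A :=
  (Coalgebra.counit (R := k) (A := C)) ⊗ₜ[k] (1 : A)

/-! ### Auxiliary lemmas -/

set_option linter.unusedSectionVars false in
variable {k A C} in
lemma evFst_tmul (c : C) (ξ : Module.Dual k C) (a : A) :
    evFst c (ξ ⊗ₜ[k] a) = ξ c • a := by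
  simp [evFst]

set_option linter.unusedSectionVars false in
variable {k A C} in
lemma evSnd_tmul (ξ : Module.Dual k C) (a : A) (c : C) :
    evSnd ξ (a ⊗ₜ[k] c) = ξ c • a := by
  simp [evSnd]

set_option linter.unusedSectionVars false in
variable {k A C} in
lemma dualTensorHom_eq_evFst (x : Module.Dual k C ⊗[k] A) (c : C) :
    dualTensorHom k C A x c = evFst c x := by
  induction x using TensorProduct.induction_on with
  | zero => simp
  | tmul ξ a => simp [dualTensorHom_apply, evFst_tmul]
  | add x y hx hy => simp [map_add, hx, hy]

set_option linter.unusedSectionVars false in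
variable {k A C} in
lemma evFst_ext [Module.Finite k C] [Module.Projective k C]
    {x y : Module.Dual k C ⊗[k] A} (h : ∀ c : C, evFst c x = evFst c y) : x = y := by
  obtain ⟨n, f, g, hsurj, hinj, hfg⟩ := Module.Finite.exists_comp_eq_id_of_projective k C
  have nat : ∀ z : Module.Dual k C ⊗[k] A,
      dualTensorHom k (Fin n → k) A (rTensor A f.dualMap z)
        = dualTensorHom k C A z ∘ₗ f := by
    intro z
    induction z using TensorProduct.induction_on with
    | zero => simp
    | tmul ξ a => ext v; simp [dualTensorHom_apply, LinearMap.dualMap_apply]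
    | add z w hz hw => simp [map_add, hz, hw, LinearMap.add_comp]
  have hd : dualTensorHom k C A x = dualTensorHom k C A y :=
    LinearMap.ext fun c => by rw [dualTensorHom_eq_evFst, dualTensorHom_eq_evFst]; exact h c
  have h2 : rTensor A f.dualMap x = rTensor A f.dualMap y := by
    apply (dualTensorHomEquivOfBasis (N := A) (Pi.basisFun k (Fin n))).injective
    rw [dualTensorHomEquivOfBasis_apply, dualTensorHomEquivOfBasis_apply, nat, nat, hd]
  have hgf : g.dualMap ∘ₗ f.dualMap = LinearMap.id := by
    rw [LinearMap.dualMap_comp_dualMap, hfg, LinearMap.dualMap_id]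
  have h3 : ∀ z : Module.Dual k C ⊗[k] A,
      rTensor A g.dualMap (rTensor A f.dualMap z) = z := by
    intro z
    rw [← LinearMap.comp_apply, ← LinearMap.rTensor_comp, hgf, LinearMap.rTensor_id,
      LinearMap.id_apply]
  rw [← h3 x, ← h3 y, h2]

variable {k A C} in
/-- The `ψ`-twisted convolution product on `C →ₗ[k] A`. -/
def conv (E : Entwining k A C) (f g : C →ₗ[k] A) : C →ₗ[k] A :=
  LinearMap.mul' k A ∘ₗ lTensor A g ∘ₗ E.psi ∘ₗ lTensor C f ∘ₗ
    (Coalgebra.comul (R := k) (A := C))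

variable {k A C} in
lemma conv_apply (E : Entwining k A C) (f g : C →ₗ[k] A) (c : C) :
    conv E f g c
      = LinearMap.mul' k A (lTensor A g (E.psi (lTensor C f
          (Coalgebra.comul (R := k) c)))) := rfl

variable {k A C} in
lemma conv_assoc (E : Entwining k A C) (f g h : C →ₗ[k] A) :
    conv E (conv E f g) h = conv E f (conv E g h) := by
  have claim4 : ∀ (p : A) (v : A ⊗[k] C),
      LinearMap.mul' k A (lTensor A h (rTensor C (LinearMap.mul' k A)
          ((TensorProduct.assoc k A A C).symm (p ⊗ₜ[k] v))))
        = p * LinearMap.mul' k A (lTensor A h v) := by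
    intro p v
    induction v using TensorProduct.induction_on with
    | zero => simp
    | tmul q w =>
        simp [TensorProduct.assoc_symm_tmul, LinearMap.mul'_apply, mul_assoc]
    | add v₁ v₂ h₁ h₂ =>
        simp only [TensorProduct.tmul_add, map_add, h₁, h₂, mul_add]
  have claim3 : ∀ (d : C) (u : A ⊗[k] C),
      LinearMap.mul' k A (lTensor A h (rTensor C (LinearMap.mul' k A)
          ((TensorProduct.assoc k A A C).symm
          (lTensor A E.psi ((TensorProduct.assoc k A C A) (u ⊗ₜ[k] g d))))))
        = LinearMap.mul' k A (lTensor A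
            (LinearMap.mul' k A ∘ₗ lTensor A h ∘ₗ E.psi ∘ₗ lTensor C g)
            ((TensorProduct.assoc k A C C) (u ⊗ₜ[k] d))) := by
    intro d u
    induction u using TensorProduct.induction_on with
    | zero => simp
    | tmul p e =>
        simp only [TensorProduct.assoc_tmul, lTensor_tmul, coe_comp, Function.comp_apply]
        exact claim4 p (E.psi (e ⊗ₜ[k] g d))
    | add u₁ u₂ h₁ h₂ =>
        simp only [TensorProduct.add_tmul, map_add, h₁, h₂]
  have claim2 : ∀ (c : C) (t : A ⊗[k] C),
      LinearMap.mul' k A (lTensor A h (E.psi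
          (c ⊗ₜ[k] LinearMap.mul' k A (lTensor A g t))))
        = LinearMap.mul' k A (lTensor A
            (LinearMap.mul' k A ∘ₗ lTensor A h ∘ₗ E.psi ∘ₗ lTensor C g)
            ((TensorProduct.assoc k A C C) (rTensor C E.psi
              ((TensorProduct.assoc k C A C).symm (c ⊗ₜ[k] t))))) := by
    intro c t
    induction t using TensorProduct.induction_on with
    | zero => simp
    | tmul s d =>
        have hmc := LinearMap.congr_fun E.mul_compat (c ⊗ₜ[k] (s ⊗ₜ[k] g d))
        simp only [coe_comp, Function.comp_apply, LinearEquiv.coe_coe,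
          TensorProduct.assoc_symm_tmul, TensorProduct.assoc_tmul,
          lTensor_tmul, rTensor_tmul, LinearMap.mul'_apply] at hmc ⊢
        rw [hmc]
        have := claim3 d (E.psi (c ⊗ₜ[k] s))
        exact this
    | add t₁ t₂ h₁ h₂ =>
        simp only [map_add, TensorProduct.tmul_add, h₁, h₂]
  have key : ∀ z : C ⊗[k] (C ⊗[k] C),
      LinearMap.mul' k A (lTensor A h (E.psi (lTensor C
          (LinearMap.mul' k A ∘ₗ lTensor A g ∘ₗ E.psi ∘ₗ lTensor C f) z)))
        = LinearMap.mul' k A (lTensor A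
            (LinearMap.mul' k A ∘ₗ lTensor A h ∘ₗ E.psi ∘ₗ lTensor C g)
            ((TensorProduct.assoc k A C C) (rTensor C E.psi
              ((TensorProduct.assoc k C A C).symm (lTensor C E.psi
                ((TensorProduct.assoc k C C A) (lTensor (C ⊗[k] C) f
                  ((TensorProduct.assoc k C C C).symm z)))))))) := by
    intro z
    induction z using TensorProduct.induction_on with
    | zero => simp
    | tmul c y =>
        induction y using TensorProduct.induction_on with
        | zero => simp
        | tmul c' c'' =>
            simp only [TensorProduct.assoc_symm_tmul, lTensor_tmul,
              TensorProduct.assoc_tmul, coe_comp, Function.comp_apply]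
            have := claim2 c (E.psi (c' ⊗ₜ[k] f c''))
            exact this
        | add y₁ y₂ h₁ h₂ =>
            simp only [TensorProduct.tmul_add, map_add, h₁, h₂]
    | add z₁ z₂ h₁ h₂ => simp only [map_add, h₁, h₂]
  ext c
  have lhs : conv E (conv E f g) h c
      = LinearMap.mul' k A (lTensor A h (E.psi (lTensor C
          (LinearMap.mul' k A ∘ₗ lTensor A g ∘ₗ E.psi ∘ₗ lTensor C f)
          (lTensor C (Coalgebra.comul (R := k) (A := C))
            (Coalgebra.comul (R := k) c))))) := by
    rw [conv_apply]
    congr 3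
    rw [show conv E f g = (LinearMap.mul' k A ∘ₗ lTensor A g ∘ₗ E.psi ∘ₗ lTensor C f)
        ∘ₗ (Coalgebra.comul (R := k) (A := C)) from rfl,
      lTensor_comp, LinearMap.comp_apply]
  have rhs : conv E f (conv E g h) c
      = LinearMap.mul' k A (lTensor A
          (LinearMap.mul' k A ∘ₗ lTensor A h ∘ₗ E.psi ∘ₗ lTensor C g)
          ((TensorProduct.assoc k A C C) (rTensor C E.psi
            ((TensorProduct.assoc k C A C).symm (lTensor C E.psi
              ((TensorProduct.assoc k C C A) (lTensor (C ⊗[k] C) f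
                ((TensorProduct.assoc k C C C).symm
                  (lTensor C (Coalgebra.comul (R := k) (A := C))
                    (Coalgebra.comul (R := k) c)))))))))) := by
    rw [conv_apply]
    rw [show conv E g h = (LinearMap.mul' k A ∘ₗ lTensor A h ∘ₗ E.psi ∘ₗ lTensor C g)
        ∘ₗ (Coalgebra.comul (R := k) (A := C)) from rfl,
      lTensor_comp, LinearMap.comp_apply]
    have hcc := LinearMap.congr_fun E.comul_compat
      (lTensor C f (Coalgebra.comul (R := k) c))
    simp only [coe_comp, Function.comp_apply, LinearEquiv.coe_coe] at hcc
    rw [hcc]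
    have hswap : rTensor A (Coalgebra.comul (R := k) (A := C))
          (lTensor C f (Coalgebra.comul (R := k) c))
        = lTensor (C ⊗[k] C) f (rTensor C (Coalgebra.comul (R := k) (A := C))
            (Coalgebra.comul (R := k) c)) := by
      rw [← LinearMap.comp_apply, LinearMap.rTensor_comp_lTensor,
        ← LinearMap.lTensor_comp_rTensor, LinearMap.comp_apply]
    rw [hswap, show rTensor C (Coalgebra.comul (R := k) (A := C))
          (Coalgebra.comul (R := k) c)
        = (TensorProduct.assoc k C C C).symm
            (lTensor C (Coalgebra.comul (R := k) (A := C))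
              (Coalgebra.comul (R := k) c)) from (Coalgebra.coassoc_symm_apply c).symm]
  rw [lhs, rhs, key]

variable {k A C} in
/-- `rEval b c = Σ b(c₍₂₎) • c₍₁₎`. -/
def rEval (b : Module.Dual k C) (c : C) : C :=
  (TensorProduct.rid k C) (lTensor C b (Coalgebra.comul (R := k) c))

variable {k C} in
lemma opConv_tmul (b ξ : Module.Dual k C) :
    opConv k C (b ⊗ₜ[k] ξ)
      = LinearMap.mul' k k ∘ₗ TensorProduct.map ξ b ∘ₗ
          (Coalgebra.comul (R := k) (A := C)) := by
  ext c
  simp [opConv]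

variable {k A C} in
lemma opConv_tmul_apply (b ξ : Module.Dual k C) (c : C) :
    opConv k C (b ⊗ₜ[k] ξ) c = ξ (rEval b c) := by
  rw [opConv_tmul]
  simp only [coe_comp, Function.comp_apply, rEval]
  generalize (Coalgebra.comul (R := k) c) = z
  induction z using TensorProduct.induction_on with
  | zero => simp
  | tmul x y =>
      simp [TensorProduct.rid_tmul, LinearMap.mul'_apply, mul_comm]
  | add z₁ z₂ h₁ h₂ => simp [map_add, h₁, h₂]

variable {k C} in
lemma opConv_counit_left (b : Module.Dual k C) :
    opConv k C ((Coalgebra.counit (R := k) (A := C)) ⊗ₜ[k] b) = b := by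
  ext c
  rw [opConv_tmul]
  simp only [coe_comp, Function.comp_apply]
  have : ∀ z : C ⊗[k] C,
      LinearMap.mul' k k (TensorProduct.map b (Coalgebra.counit (R := k)) z)
        = b ((TensorProduct.rid k C)
            (lTensor C (Coalgebra.counit (R := k) (A := C)) z)) := by
    intro z
    induction z using TensorProduct.induction_on with
    | zero => simp
    | tmul x y => simp [TensorProduct.rid_tmul, LinearMap.mul'_apply, mul_comm]
    | add z₁ z₂ h₁ h₂ => simp [map_add, h₁, h₂]
  rw [this, show lTensor C (Coalgebra.counit (R := k) (A := C))
      (Coalgebra.comul (R := k) c) = c ⊗ₜ[k] (1 : k) from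
      Coalgebra.lTensor_counit_comul c]
  simp

variable {k C} in
lemma opConv_counit_right (b : Module.Dual k C) :
    opConv k C (b ⊗ₜ[k] (Coalgebra.counit (R := k) (A := C))) = b := by
  ext c
  rw [opConv_tmul]
  simp only [coe_comp, Function.comp_apply]
  have : ∀ z : C ⊗[k] C,
      LinearMap.mul' k k (TensorProduct.map (Coalgebra.counit (R := k)) b z)
        = b ((TensorProduct.lid k C)
            (rTensor C (Coalgebra.counit (R := k) (A := C)) z)) := by
    intro z
    induction z using TensorProduct.induction_on with
    | zero => simp
    | tmul x y => simp [TensorProduct.lid_tmul, LinearMap.mul'_apply]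
    | add z₁ z₂ h₁ h₂ => simp [map_add, h₁, h₂]
  rw [this, show rTensor C (Coalgebra.counit (R := k) (A := C))
      (Coalgebra.comul (R := k) c) = (1 : k) ⊗ₜ[k] c from
      Coalgebra.rTensor_counit_comul c]
  simp

variable {k A C} in
lemma transfer (E : Entwining k A C)
    (ψbar : A ⊗[k] Module.Dual k C →ₗ[k] Module.Dual k C ⊗[k] A)
    (hfact : IsFactorisation E ψbar)
    (x y : Module.Dual k C ⊗[k] A) (c : C) :
    evFst c (smashMul ψbar (x ⊗ₜ[k] y))
      = conv E (dualTensorHom k C A x) (dualTensorHom k C A y) c := by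
  induction x using TensorProduct.induction_on with
  | zero => simp [conv_apply]
  | add x₁ x₂ h₁ h₂ =>
      rw [TensorProduct.add_tmul, map_add, map_add, map_add, h₁, h₂]
      have : ∀ z : C ⊗[k] C, lTensor C (dualTensorHom k C A x₁ + dualTensorHom k C A x₂) z
          = lTensor C (dualTensorHom k C A x₁) z + lTensor C (dualTensorHom k C A x₂) z := by
        intro z; rw [lTensor_add, LinearMap.add_apply]
      simp only [conv_apply, this, map_add]
  | tmul b a =>
    induction y using TensorProduct.induction_on with
    | zero => simp [conv_apply]
    | add y₁ y₂ h₁ h₂ =>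
        rw [TensorProduct.tmul_add, map_add, map_add, map_add, h₁, h₂]
        have : ∀ u : A ⊗[k] C,
            lTensor A (dualTensorHom k C A y₁ + dualTensorHom k C A y₂) u
              = lTensor A (dualTensorHom k C A y₁) u
                + lTensor A (dualTensorHom k C A y₂) u := by
          intro u; rw [lTensor_add, LinearMap.add_apply]
        simp only [conv_apply, this, map_add]
    | tmul b' a' =>
      -- unfold the first steps of `smashMul`
      have hsm : smashMul ψbar ((b ⊗ₜ[k] a) ⊗ₜ[k] (b' ⊗ₜ[k] a'))
          = (rTensor A (opConv k C))
              ((TensorProduct.assoc k (Module.Dual k C) (Module.Dual k C) A).symm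
                (lTensor (Module.Dual k C) (lTensor (Module.Dual k C) (LinearMap.mul' k A))
                  (lTensor (Module.Dual k C)
                    (TensorProduct.assoc k (Module.Dual k C) A A)
                    (b ⊗ₜ[k] ((ψbar (a ⊗ₜ[k] b')) ⊗ₜ[k] a'))))) := by
        simp only [smashMul, coe_comp, Function.comp_apply, LinearEquiv.coe_coe,
          TensorProduct.assoc_tmul, TensorProduct.assoc_symm_tmul, lTensor_tmul,
          rTensor_tmul]
      rw [hsm]
      have T1 : ∀ t : Module.Dual k C ⊗[k] A,
          evFst c ((rTensor A (opConv k C))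
              ((TensorProduct.assoc k (Module.Dual k C) (Module.Dual k C) A).symm
                (lTensor (Module.Dual k C) (lTensor (Module.Dual k C) (LinearMap.mul' k A))
                  (lTensor (Module.Dual k C)
                    (TensorProduct.assoc k (Module.Dual k C) A A)
                    (b ⊗ₜ[k] (t ⊗ₜ[k] a'))))))
            = evFst (rEval b c) t * a' := by
        intro t
        induction t using TensorProduct.induction_on with
        | zero => simp
        | tmul ξ s =>
            simp only [LinearEquiv.coe_coe, lTensor_tmul, TensorProduct.assoc_tmul,
              TensorProduct.assoc_symm_tmul, rTensor_tmul, LinearMap.mul'_apply,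
              evFst_tmul, opConv_tmul_apply, smul_mul_assoc]
        | add t₁ t₂ h₁ h₂ =>
            simp only [TensorProduct.add_tmul, TensorProduct.tmul_add, map_add,
              h₁, h₂, add_mul]
      rw [T1, hfact a b' (rEval b c)]
      -- now compute the right-hand side
      rw [conv_apply]
      have T2 : lTensor C (dualTensorHom k C A (b ⊗ₜ[k] a))
            (Coalgebra.comul (R := k) c) = (rEval b c) ⊗ₜ[k] a := by
        rw [rEval]
        generalize (Coalgebra.comul (R := k) c) = z
        induction z using TensorProduct.induction_on with
        | zero => simp
        | tmul x y =>
            simp [dualTensorHom_apply, TensorProduct.rid_tmul,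
              TensorProduct.smul_tmul]
        | add z₁ z₂ h₁ h₂ => simp [map_add, h₁, h₂, TensorProduct.add_tmul]
      rw [T2]
      have T3 : ∀ u : A ⊗[k] C,
          LinearMap.mul' k A (lTensor A (dualTensorHom k C A (b' ⊗ₜ[k] a')) u)
            = evSnd b' u * a' := by
        intro u
        induction u using TensorProduct.induction_on with
        | zero => simp
        | tmul p e =>
            simp [dualTensorHom_apply, LinearMap.mul'_apply, evSnd_tmul,
              mul_smul_comm, smul_mul_assoc]
        | add u₁ u₂ h₁ h₂ => simp only [map_add, h₁, h₂, add_mul]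
      rw [T3]

variable {k A C} in
lemma dualTensorHom_smashMul (E : Entwining k A C)
    (ψbar : A ⊗[k] Module.Dual k C →ₗ[k] Module.Dual k C ⊗[k] A)
    (hfact : IsFactorisation E ψbar) (x y : Module.Dual k C ⊗[k] A) :
    dualTensorHom k C A (smashMul ψbar (x ⊗ₜ[k] y))
      = conv E (dualTensorHom k C A x) (dualTensorHom k C A y) :=
  LinearMap.ext fun c => by
    rw [dualTensorHom_eq_evFst]; exact transfer E ψbar hfact x y c

variable {k A C} in
lemma psibar_one [Module.Finite k C] [Module.Projective k C]
    (E : Entwining k A C)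
    (ψbar : A ⊗[k] Module.Dual k C →ₗ[k] Module.Dual k C ⊗[k] A)
    (hfact : IsFactorisation E ψbar) (ξ : Module.Dual k C) :
    ψbar ((1 : A) ⊗ₜ[k] ξ) = ξ ⊗ₜ[k] (1 : A) := by
  apply evFst_ext
  intro c
  rw [hfact, E.one_compat c, evFst_tmul, evSnd_tmul]

variable {k A C} in
lemma psibar_counit [Module.Finite k C] [Module.Projective k C]
    (E : Entwining k A C)
    (ψbar : A ⊗[k] Module.Dual k C →ₗ[k] Module.Dual k C ⊗[k] A)
    (hfact : IsFactorisation E ψbar) (a : A) :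
    ψbar (a ⊗ₜ[k] (Coalgebra.counit (R := k) (A := C)))
      = (Coalgebra.counit (R := k) (A := C)) ⊗ₜ[k] a := by
  apply evFst_ext
  intro c
  rw [hfact, evFst_tmul]
  have : evSnd (Coalgebra.counit (R := k) (A := C)) (E.psi (c ⊗ₜ[k] a))
      = (TensorProduct.rid k A)
          ((lTensor A (Coalgebra.counit (R := k) (A := C))) (E.psi (c ⊗ₜ[k] a))) := rfl
  rw [this, E.counit_compat c a]


set_option synthInstance.maxHeartbeats 1000000 in
set_option maxHeartbeats 2000000 in

/-- for a factorisable entwining structure, the smash product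
`B #_ψ̄ A` (`B = C^{*op}`) is an associative unital `k`-algebra with unit `ε ⊗ 1`. -/
theorem smash_assoc_unital [Module.Finite k C] [Module.Projective k C]
    (E : Entwining k A C)
    (ψbar : A ⊗[k] Module.Dual k C →ₗ[k] Module.Dual k C ⊗[k] A)
    (hfact : IsFactorisation E ψbar)
    (huniq : ∀ ψbar' : A ⊗[k] Module.Dual k C →ₗ[k] Module.Dual k C ⊗[k] A,
      IsFactorisation E ψbar' → ψbar' = ψbar) :
    -- associativity
    (smashMul ψbar ∘ₗ rTensor (Module.Dual k C ⊗[k] A) (smashMul ψbar)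
      = smashMul ψbar ∘ₗ lTensor (Module.Dual k C ⊗[k] A) (smashMul ψbar)
        ∘ₗ (TensorProduct.assoc k (Module.Dual k C ⊗[k] A)
            (Module.Dual k C ⊗[k] A) (Module.Dual k C ⊗[k] A)).toLinearMap) ∧
    -- `ε ⊗ 1` is a left and right unit
    (∀ x : Module.Dual k C ⊗[k] A,
      smashMul ψbar (smashOne k A C ⊗ₜ[k] x) = x ∧
      smashMul ψbar (x ⊗ₜ[k] smashOne k A C) = x) := by
  constructor
  · apply TensorProduct.ext'
    intro w z
    induction w using TensorProduct.induction_on with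
    | zero => simp
    | add w₁ w₂ h₁ h₂ =>
        simp only [coe_comp, Function.comp_apply, LinearEquiv.coe_coe,
          TensorProduct.add_tmul, map_add] at h₁ h₂ ⊢
        rw [h₁, h₂]
    | tmul x y =>
        simp only [coe_comp, Function.comp_apply, LinearEquiv.coe_coe,
          rTensor_tmul, lTensor_tmul, TensorProduct.assoc_tmul]
        apply evFst_ext
        intro c
        rw [transfer E ψbar hfact, transfer E ψbar hfact,
          dualTensorHom_smashMul E ψbar hfact, dualTensorHom_smashMul E ψbar hfact,
          conv_assoc]
  · intro x
    constructor
    · induction x using TensorProduct.induction_on with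
      | zero => simp
      | add x₁ x₂ h₁ h₂ => rw [TensorProduct.tmul_add, map_add, h₁, h₂]
      | tmul b a =>
          simp only [smashMul, smashOne, coe_comp, Function.comp_apply,
            LinearEquiv.coe_coe, TensorProduct.assoc_tmul,
            TensorProduct.assoc_symm_tmul, lTensor_tmul, rTensor_tmul]
          rw [psibar_one E ψbar hfact b]
          simp only [LinearEquiv.coe_coe, TensorProduct.assoc_tmul, lTensor_tmul,
            TensorProduct.assoc_symm_tmul, rTensor_tmul, LinearMap.mul'_apply,
            one_mul, opConv_counit_left]
    · induction x using TensorProduct.induction_on with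
      | zero => simp
      | add x₁ x₂ h₁ h₂ => rw [TensorProduct.add_tmul, map_add, h₁, h₂]
      | tmul b a =>
          simp only [smashMul, smashOne, coe_comp, Function.comp_apply,
            LinearEquiv.coe_coe, TensorProduct.assoc_tmul,
            TensorProduct.assoc_symm_tmul, lTensor_tmul, rTensor_tmul]
          rw [psibar_counit E ψbar hfact a]
          simp only [LinearEquiv.coe_coe, TensorProduct.assoc_tmul, lTensor_tmul,
            TensorProduct.assoc_symm_tmul, rTensor_tmul, LinearMap.mul'_apply,
            mul_one, opConv_counit_right]
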